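/- Continuation Principle for the L-domination game: Let G be a finite simple graph without isolated vertices and let B ⊆ A ⊆ V(G). Then γ_Lg(G|A) ≤ γ_Lg(G|B) and γ'_Lg(G|A) ≤ γ'_Lg(G|B). -/

import Mathlib

/- Formalization of the domination games from "The variety of domination games".

A game is specified by a legality predicate `legal : List V → V → Prop`, where the list
records the previously played vertices (most recent first).  Players alternate moves;
each move must be legal; the game ends when no legal move exists.  Dominator wants to
minimize, Staller to maximize, the total number of moves.

`canEnd legal k turn h` states that, with history `h` and the player to move given by
`turn` (`true` = Dominator), Dominator can guarantee that at most `k` further moves are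
played (against any play of Staller).  The value of the game under optimal play by both
players is then the least such `k` from the empty history. -/

/-- The closed neighborhood `N[v]` of a vertex. -/
def closedNbhd {V : Type*} (G : SimpleGraph V) (v : V) : Set V :=
  insert v (G.neighborSet v)

/-- `⋃_{u ∈ h} N[u]` : the set of vertices dominated by the moves in `h`. -/
def dominatedBy {V : Type*} (G : SimpleGraph V) (h : List V) : Set V :=
  ⋃ u ∈ h, closedNbhd G u

/-- `⋃_{u ∈ h} N(u)` : the set of vertices totally dominated by the moves in `h`. -/
def totDominatedBy {V : Type*} (G : SimpleGraph V) (h : List V) : Set V :=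
  ⋃ u ∈ h, G.neighborSet u

/-- Legality in the domination game: `N[v] \ ⋃_{j<i} N[v_j] ≠ ∅`. -/
def dgLegal {V : Type*} (G : SimpleGraph V) (h : List V) (v : V) : Prop :=
  (closedNbhd G v \ dominatedBy G h).Nonempty

/-- Legality in the total domination game: `N(v) \ ⋃_{j<i} N(v_j) ≠ ∅`. -/
def tgLegal {V : Type*} (G : SimpleGraph V) (h : List V) (v : V) : Prop :=
  (G.neighborSet v \ totDominatedBy G h).Nonempty

/-- Legality in the Z-domination game on `G|A`: `N(v) \ (A ∪ ⋃_{j<i} N[v_j]) ≠ ∅`. -/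
def zLegal {V : Type*} (G : SimpleGraph V) (A : Set V) (h : List V) (v : V) : Prop :=
  (G.neighborSet v \ (A ∪ dominatedBy G h)).Nonempty

/-- Legality in the LL-domination game on `G|A`: `N[v] \ (A ∪ ⋃_{j<i} N(v_j)) ≠ ∅`. -/
def llLegal {V : Type*} (G : SimpleGraph V) (A : Set V) (h : List V) (v : V) : Prop :=
  (closedNbhd G v \ (A ∪ totDominatedBy G h)).Nonempty

/-- Legality in the L-domination game on `G|A`: as in the LL-game, and moreover no vertex
may be played twice. -/
def lLegal {V : Type*} (G : SimpleGraph V) (A : Set V) (h : List V) (v : V) : Prop :=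
  llLegal G A h v ∧ v ∉ h

/-- `canEnd legal k turn h` : with previously played vertices `h` and the player to move
given by `turn` (`true` = Dominator, `false` = Staller), Dominator has a strategy
guaranteeing that at most `k` further moves are made. -/
def canEnd {V : Type*} (legal : List V → V → Prop) : ℕ → Bool → List V → Prop
  | 0, _, h => ∀ v, ¬ legal h v
  | k+1, true, h => (∀ v, ¬ legal h v) ∨ ∃ v, legal h v ∧ canEnd legal k false (v :: h)
  | k+1, false, h => ∀ v, legal h v → canEnd legal k true (v :: h)

/-- The number of moves in the game with legality predicate `legal` when both players play
optimally (Dominator minimizing, Staller maximizing the number of moves); `dFirst = true`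
means Dominator makes the first move. -/
noncomputable def gameVal {V : Type*} (legal : List V → V → Prop) (dFirst : Bool) : ℕ :=
  sInf {k | canEnd legal k dFirst []}

/-- The game Z-domination number `γ_Zg(G|A)` (Dominator starts). -/
noncomputable def gammaZgA {V : Type*} (G : SimpleGraph V) (A : Set V) : ℕ :=
  gameVal (zLegal G A) true

/-- The Staller-start game Z-domination number `γ'_Zg(G|A)`. -/
noncomputable def gammaZgA' {V : Type*} (G : SimpleGraph V) (A : Set V) : ℕ :=
  gameVal (zLegal G A) false

/-- The game L-domination number `γ_Lg(G|A)` (Dominator starts). -/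
noncomputable def gammaLgA {V : Type*} (G : SimpleGraph V) (A : Set V) : ℕ :=
  gameVal (lLegal G A) true

/-- The Staller-start game L-domination number `γ'_Lg(G|A)`. -/
noncomputable def gammaLgA' {V : Type*} (G : SimpleGraph V) (A : Set V) : ℕ :=
  gameVal (lLegal G A) false

/-- The game LL-domination number `γ_LLg(G|A)` (Dominator starts). -/
noncomputable def gammaLLgA {V : Type*} (G : SimpleGraph V) (A : Set V) : ℕ :=
  gameVal (llLegal G A) true

/-- The Staller-start game LL-domination number `γ'_LLg(G|A)`. -/
noncomputable def gammaLLgA' {V : Type*} (G : SimpleGraph V) (A : Set V) : ℕ :=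
  gameVal (llLegal G A) false

/-- The game domination number `γ_g(G)` (Dominator starts). -/
noncomputable def gammaG {V : Type*} (G : SimpleGraph V) : ℕ :=
  gameVal (dgLegal G) true

/-- The game total domination number `γ_tg(G)` (Dominator starts). -/
noncomputable def gammaTg {V : Type*} (G : SimpleGraph V) : ℕ :=
  gameVal (tgLegal G) true

/-- The game Z-domination number `γ_Zg(G)` (Dominator starts). -/
noncomputable def gammaZg {V : Type*} (G : SimpleGraph V) : ℕ := gammaZgA G ∅

/-- The Staller-start game Z-domination number `γ'_Zg(G)`. -/
noncomputable def gammaZg' {V : Type*} (G : SimpleGraph V) : ℕ := gammaZgA' G ∅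

/-- The game L-domination number `γ_Lg(G)` (Dominator starts). -/
noncomputable def gammaLg {V : Type*} (G : SimpleGraph V) : ℕ := gammaLgA G ∅

/-- The Staller-start game L-domination number `γ'_Lg(G)`. -/
noncomputable def gammaLg' {V : Type*} (G : SimpleGraph V) : ℕ := gammaLgA' G ∅

/-- The game LL-domination number `γ_LLg(G)` (Dominator starts). -/
noncomputable def gammaLLg {V : Type*} (G : SimpleGraph V) : ℕ := gammaLLgA G ∅

/-- The Staller-start game LL-domination number `γ'_LLg(G)`. -/
noncomputable def gammaLLg' {V : Type*} (G : SimpleGraph V) : ℕ := gammaLLgA' G ∅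

/-- `G` has no isolated vertices. -/
def isolateFree {V : Type*} (G : SimpleGraph V) : Prop := ∀ v : V, ∃ u, G.Adj v u

/-- The domination number `γ(G)`. -/
noncomputable def domNum {V : Type*} (G : SimpleGraph V) : ℕ :=
  sInf {k | ∃ S : Finset V, S.card = k ∧ ∀ v : V, ∃ u ∈ S, v ∈ closedNbhd G u}

/-- The total domination number `γ_t(G)`. -/
noncomputable def totDomNum {V : Type*} (G : SimpleGraph V) : ℕ :=
  sInf {k | ∃ S : Finset V, S.card = k ∧ ∀ v : V, ∃ u ∈ S, G.Adj u v}

section ContinuationAux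

variable {V : Type*}

lemma totDominatedBy_cons (G : SimpleGraph V) (v : V) (h : List V) :
    totDominatedBy G (v :: h) = G.neighborSet v ∪ totDominatedBy G h := by
  ext x; simp [totDominatedBy]

lemma neighborSet_subset_totDominatedBy (G : SimpleGraph V) {v : V} {h : List V}
    (hv : v ∈ h) : G.neighborSet v ⊆ totDominatedBy G h := by
  intro x hx
  exact Set.mem_biUnion hv hx

/-- transfer of legality under the invariants -/
lemma legal_transfer (G : SimpleGraph V) (A B : Set V) (hA hB : List V)
    (I1 : B ∪ totDominatedBy G hB ⊆ A ∪ totDominatedBy G hA)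
    (I2 : ∀ x ∈ hB, x ∈ hA ∨ closedNbhd G x ⊆ A ∪ totDominatedBy G hA)
    {v : V} (hv : lLegal G A hA v) : lLegal G B hB v := by
  obtain ⟨⟨x, hx1, hx2⟩, hvn⟩ := hv
  refine ⟨⟨x, hx1, fun hc => hx2 (I1 hc)⟩, fun hvB => ?_⟩
  rcases I2 v hvB with h1 | h1
  · exact hvn h1
  · exact hx2 (h1 hx1)

lemma canEnd_mono (G : SimpleGraph V) (A B : Set V) :
    ∀ (k : ℕ) (turn : Bool) (hA hB : List V),
    B ∪ totDominatedBy G hB ⊆ A ∪ totDominatedBy G hA →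
    (∀ x ∈ hB, x ∈ hA ∨ closedNbhd G x ⊆ A ∪ totDominatedBy G hA) →
    canEnd (lLegal G B) k turn hB → canEnd (lLegal G A) k turn hA := by
  intro k
  induction k with
  | zero =>
    intro turn hA hB I1 I2 hc v hv
    exact hc v (legal_transfer G A B hA hB I1 I2 hv)
  | succ k ih =>
    intro turn hA hB I1 I2 hc
    -- invariant preservation when the same vertex is appended to both histories
    have step : ∀ v : V,
        (B ∪ totDominatedBy G (v :: hB) ⊆ A ∪ totDominatedBy G (v :: hA)) ∧
        (∀ x ∈ (v :: hB), x ∈ (v :: hA) ∨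
          closedNbhd G x ⊆ A ∪ totDominatedBy G (v :: hA)) := by
      intro v
      constructor
      · rw [totDominatedBy_cons, totDominatedBy_cons]
        intro x hx
        rcases hx with hx | hx
        · rcases I1 (Or.inl hx) with h1 | h1
          · exact Or.inl h1
          · exact Or.inr (Or.inr h1)
        · rcases hx with hx | hx
          · exact Or.inr (Or.inl hx)
          · rcases I1 (Or.inr hx) with h1 | h1
            · exact Or.inl h1
            · exact Or.inr (Or.inr h1)
      · intro x hx
        rcases List.mem_cons.mp hx with rfl | hx
        · exact Or.inl List.mem_cons_self
        · rcases I2 x hx with h1 | h1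
          · exact Or.inl (List.mem_cons_of_mem _ h1)
          · refine Or.inr (h1.trans ?_)
            rw [totDominatedBy_cons]
            intro y hy
            rcases hy with hy | hy
            · exact Or.inl hy
            · exact Or.inr (Or.inr hy)
    cases turn with
    | false =>
      intro v hv
      exact ih true (v :: hA) (v :: hB) (step v).1 (step v).2
        (hc v (legal_transfer G A B hA hB I1 I2 hv))
    | true =>
      rcases hc with hc | ⟨d, hd, hcd⟩
      · exact Or.inl (fun v hv => hc v (legal_transfer G A B hA hB I1 I2 hv))
      · by_cases hdA : lLegal G A hA d
        · exact Or.inr ⟨d, hdA, ih false (d :: hA) (d :: hB) (step d).1 (step d).2 hcd⟩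
        · -- d is illegal in the real game
          by_cases hex : ∃ w, lLegal G A hA w
          · obtain ⟨w, hw⟩ := hex
            -- N(d) is already dominated in the real game
            have hNd : G.neighborSet d ⊆ A ∪ totDominatedBy G hA := by
              by_cases hdh : d ∈ hA
              · exact fun x hx => Or.inr (neighborSet_subset_totDominatedBy G hdh hx)
              · intro x hx
                by_contra hxc
                exact hdA ⟨⟨x, Or.inr hx, hxc⟩, hdh⟩
            refine Or.inr ⟨w, hw, ih false (w :: hA) (d :: hB) ?_ ?_ hcd⟩
            · rw [totDominatedBy_cons, totDominatedBy_cons]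
              intro x hx
              rcases hx with hx | hx
              · rcases I1 (Or.inl hx) with h1 | h1
                · exact Or.inl h1
                · exact Or.inr (Or.inr h1)
              · rcases hx with hx | hx
                · rcases hNd hx with h1 | h1
                  · exact Or.inl h1
                  · exact Or.inr (Or.inr h1)
                · rcases I1 (Or.inr hx) with h1 | h1
                  · exact Or.inl h1
                  · exact Or.inr (Or.inr h1)
            · intro x hx
              have mono : A ∪ totDominatedBy G hA ⊆ A ∪ totDominatedBy G (w :: hA) := by
                rw [totDominatedBy_cons]
                intro y hy
                rcases hy with hy | hy
                · exact Or.inl hy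
                · exact Or.inr (Or.inr hy)
              rcases List.mem_cons.mp hx with rfl | hx
              · -- x = d
                by_cases hdh : x ∈ hA
                · exact Or.inl (List.mem_cons_of_mem _ hdh)
                · refine Or.inr (fun y hy => ?_)
                  rcases hy with hy | hy
                  · -- y = d, in closed nbhd
                    by_contra hyc
                    exact hdA ⟨⟨y, Or.inl hy, fun hc' => hyc (mono hc')⟩, hdh⟩
                  · exact mono (hNd hy)
              · rcases I2 x hx with h1 | h1
                · exact Or.inl (List.mem_cons_of_mem _ h1)
                · exact Or.inr (h1.trans mono)
          · push_neg at hex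
            exact Or.inl hex

/-- The L-game always ends within `Fintype.card V` moves. -/
lemma canEnd_card [Fintype V] (G : SimpleGraph V) (B : Set V) :
    ∀ (k : ℕ) (h : List V), h.Nodup → Fintype.card V ≤ k + h.length →
    ∀ turn, canEnd (lLegal G B) k turn h := by
  classical
  intro k
  induction k with
  | zero =>
    intro h hnd hlen turn v hv
    have hcard : h.toFinset.card = h.length := List.toFinset_card_of_nodup hnd
    have hle : h.toFinset.card ≤ Fintype.card V := by
      simpa using Finset.card_le_univ h.toFinset
    have huniv : h.toFinset = Finset.univ := by
      apply Finset.eq_univ_of_card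
      omega
    have : v ∈ h := by
      rw [← List.mem_toFinset, huniv]; exact Finset.mem_univ v
    exact hv.2 this
  | succ k ih =>
    intro h hnd hlen turn
    have key : ∀ v, lLegal G B h v → canEnd (lLegal G B) k true (v :: h) ∧
        canEnd (lLegal G B) k false (v :: h) := by
      intro v hv
      have hnd' : (v :: h).Nodup := List.nodup_cons.mpr ⟨hv.2, hnd⟩
      have hlen' : Fintype.card V ≤ k + (v :: h).length := by
        simp only [List.length_cons]; omega
      exact ⟨ih (v :: h) hnd' hlen' true, ih (v :: h) hnd' hlen' false⟩
    cases turn with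
    | false => intro v hv; exact (key v hv).1
    | true =>
      by_cases hex : ∃ v, lLegal G B h v
      · obtain ⟨v, hv⟩ := hex
        exact Or.inr ⟨v, hv, (key v hv).2⟩
      · push_neg at hex
        exact Or.inl hex

end ContinuationAux

/-- Continuation Principle for the L-domination game on predominated graphs. -/
theorem continuation_principle_L {V : Type*} [Fintype V] (G : SimpleGraph V)
    (hG : isolateFree G) (A B : Set V) (hBA : B ⊆ A) :
    gammaLgA G A ≤ gammaLgA G B ∧ gammaLgA' G A ≤ gammaLgA' G B := by
  have I1 : B ∪ totDominatedBy G ([] : List V) ⊆ A ∪ totDominatedBy G ([] : List V) := by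
    intro x hx
    rcases hx with hx | hx
    · exact Or.inl (hBA hx)
    · exact Or.inr hx
  have I2 : ∀ x ∈ ([] : List V), x ∈ ([] : List V) ∨
      closedNbhd G x ⊆ A ∪ totDominatedBy G ([] : List V) := by
    intro x hx; exact absurd hx List.not_mem_nil
  have hne : ∀ turn, canEnd (lLegal G B) (Fintype.card V) turn ([] : List V) := by
    intro turn
    exact canEnd_card G B (Fintype.card V) [] List.nodup_nil (by simp) turn
  constructor
  · exact csInf_le_csInf (OrderBot.bddBelow _) ⟨Fintype.card V, hne true⟩
      (fun k hk => canEnd_mono G A B k true [] [] I1 I2 hk)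
  · exact csInf_le_csInf (OrderBot.bddBelow _) ⟨Fintype.card V, hne false⟩
      (fun k hk => canEnd_mono G A B k false [] [] I1 I2 hk)
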